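/- arXiv:2501.12565 — 6 statements merged into one kernel-verified Lean document; each statement's English description precedes it below -/
import Mathlib

section
/- Any board of 5 distinct points in F_3^4 contains at most 2 sets. -/
abbrev Pt := Fin 4 → ZMod 3

def numSets (B : Finset Pt) : ℕ :=
  ((B.powersetCard 3).filter (fun S => S.sum id = 0)).card

def IsMagicSquare (B : Finset Pt) : Prop :=
  ∃ (p : Pt) (V : Submodule (ZMod 3) Pt), Module.finrank (ZMod 3) V = 2 ∧
    (B : Set Pt) = (fun v => p + v) '' (V : Set Pt)

lemma triple_eq (U : Finset Pt) (hU : U.card = 3) (hs : U.sum id = 0)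
    {p q : Pt} (hp : p ∈ U) (hq : q ∈ U) (hpq : p ≠ q) :
    U = insert p (insert q {-(p+q)}) := by
  have hsub : ({p, q} : Finset Pt) ⊆ U := by
    intro x hx; simp at hx; rcases hx with h | h <;> subst h <;> assumption
  have hcardpq : ({p, q} : Finset Pt).card = 2 := Finset.card_pair hpq
  have hc : (U \ {p, q}).card = 1 := by
    rw [Finset.card_sdiff_of_subset hsub, hU, hcardpq]
  obtain ⟨r, hr⟩ := Finset.card_eq_one.mp hc
  have hsum : (U \ {p, q}).sum id + ({p,q} : Finset Pt).sum id = U.sum id :=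
    Finset.sum_sdiff hsub
  rw [hr, hs] at hsum
  simp [hpq] at hsum
  have hrval : r = -(p + q) := by
    have := hsum
    linear_combination this
  have : U = {p, q} ∪ (U \ {p, q}) := by
    rw [Finset.union_sdiff_of_subset hsub]
  rw [this, hr, hrval]
  ext x; simp [Finset.mem_insert]
theorem stmt3 (B : Finset Pt) (hB : B.card = 5) : numSets B ≤ 2 := by
  by_contra h
  push_neg at h
  unfold numSets at h
  set F := ((B.powersetCard 3).filter (fun S => S.sum id = 0)) with hF
  obtain ⟨T, hTF, hT3⟩ := Finset.exists_subset_card_eq (by omega : 3 ≤ F.card)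
  obtain ⟨S1, S2, S3, h12, h13, h23, hT⟩ := Finset.card_eq_three.mp hT3
  have hmem : ∀ S ∈ T, S ⊆ B ∧ S.card = 3 ∧ S.sum id = 0 := by
    intro S hS
    have := hTF hS
    rw [hF, Finset.mem_filter, Finset.mem_powersetCard] at this
    tauto
  have h1 := hmem S1 (by simp [hT])
  have h2 := hmem S2 (by simp [hT])
  have h3 := hmem S3 (by simp [hT])
  -- distinct triples intersect in ≤ 1 point
  have key : ∀ S S' : Finset Pt, S.card = 3 → S'.card = 3 → S.sum id = 0 → S'.sum id = 0 →
      S ≠ S' → (S ∩ S').card ≤ 1 := by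
    intro S S' hc hc' hs hs' hne
    by_contra hlt
    push_neg at hlt
    obtain ⟨p, hp, q, hq, hpq⟩ := Finset.one_lt_card.mp hlt
    simp only [Finset.mem_inter] at hp hq
    have e1 := triple_eq S hc hs hp.1 hq.1 hpq
    have e2 := triple_eq S' hc' hs' hp.2 hq.2 hpq
    exact hne (e1.trans e2.symm)
  have k12 := key S1 S2 h1.2.1 h2.2.1 h1.2.2 h2.2.2 h12
  have k13 := key S1 S3 h1.2.1 h3.2.1 h1.2.2 h3.2.2 h13
  have k23 := key S2 S3 h2.2.1 h3.2.1 h2.2.2 h3.2.2 h23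
  have hu12 : 5 ≤ (S1 ∪ S2).card := by
    have := Finset.card_union_add_card_inter S1 S2
    omega
  have hun : ((S1 ∪ S2) ∩ S3).card ≤ 2 := by
    rw [Finset.union_inter_distrib_right]
    calc ((S1 ∩ S3) ∪ (S2 ∩ S3)).card ≤ (S1 ∩ S3).card + (S2 ∩ S3).card :=
      Finset.card_union_le _ _
    _ ≤ 2 := by omega
  have hu : 6 ≤ (S1 ∪ S2 ∪ S3).card := by
    have := Finset.card_union_add_card_inter (S1 ∪ S2) S3
    omega
  have hsubB : S1 ∪ S2 ∪ S3 ⊆ B := by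
    intro x hx
    simp only [Finset.mem_union] at hx
    rcases hx with (h | h) | h
    exacts [h1.1 h, h2.1 h, h3.1 h]
  have := Finset.card_le_card hsubB
  omega
end

section
/- Any board of 6 distinct points in F_3^4 contains at most 3 sets. -/
-- Lemma A: two distinct "sets" intersect in at most one point
lemma lemA {S T : Finset Pt} (hS : S.card = 3) (hT : T.card = 3)
    (hs : S.sum id = 0) (ht : T.sum id = 0) (hne : S ≠ T) :
    (S ∩ T).card ≤ 1 := by
  by_contra h
  push_neg at h
  set D := S ∩ T with hD
  have hDS : D ⊆ S := Finset.inter_subset_left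
  have hDT : D ⊆ T := Finset.inter_subset_right
  have hle : D.card ≤ 3 := hS ▸ Finset.card_le_card hDS
  interval_cases hc : D.card
  · -- card = 2
    have h1 : (S \ D).card = 1 := by
      rw [Finset.card_sdiff_of_subset hDS, hS, hc]
    have h2 : (T \ D).card = 1 := by
      rw [Finset.card_sdiff_of_subset hDT, hT, hc]
    obtain ⟨r, hr⟩ := Finset.card_eq_one.mp h1
    obtain ⟨r', hr'⟩ := Finset.card_eq_one.mp h2
    have hSu : D ∪ (S \ D) = S := Finset.union_sdiff_of_subset hDS
    have hTu : D ∪ (T \ D) = T := Finset.union_sdiff_of_subset hDT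
    have hsum : D.sum id + r = 0 := by
      have : D.sum id + (S \ D).sum id = 0 := by
        rw [← Finset.sum_union Finset.disjoint_sdiff, hSu]; exact hs
      rw [hr] at this; simpa using this
    have hsum' : D.sum id + r' = 0 := by
      have : D.sum id + (T \ D).sum id = 0 := by
        rw [← Finset.sum_union Finset.disjoint_sdiff, hTu]; exact ht
      rw [hr'] at this; simpa using this
    have : r = r' := by
      have := hsum.trans hsum'.symm
      exact add_left_cancel this
    apply hne
    rw [← hSu, ← hTu, hr, hr', this]
  · -- card = 3
    exact hne (by
      have h1 : D = S := Finset.eq_of_subset_of_card_le hDS (by omega)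
      have h2 : D = T := Finset.eq_of_subset_of_card_le hDT (by omega)
      rw [← h1, h2])

-- two common points force equality
lemma lemA2 {S T : Finset Pt} (hS : S.card = 3) (hT : T.card = 3)
    (hs : S.sum id = 0) (ht : T.sum id = 0) {p q : Pt} (hpq : p ≠ q)
    (hpS : p ∈ S) (hpT : p ∈ T) (hqS : q ∈ S) (hqT : q ∈ T) : S = T := by
  by_contra hne
  have h1 := lemA hS hT hs ht hne
  have h2 : ({p, q} : Finset Pt) ⊆ S ∩ T := by
    intro x hx
    simp only [Finset.mem_insert, Finset.mem_singleton] at hx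
    rcases hx with rfl | rfl <;> simp [Finset.mem_inter, *]
  have := Finset.card_le_card h2
  rw [Finset.card_pair hpq] at this
  omega

-- Lemma B: no point lies in three distinct sets
lemma lemB {B : Finset Pt} (hB : B.card = 6) {S1 S2 S3 : Finset Pt}
    (hsub1 : S1 ⊆ B) (hsub2 : S2 ⊆ B) (hsub3 : S3 ⊆ B)
    (hc1 : S1.card = 3) (hc2 : S2.card = 3) (hc3 : S3.card = 3)
    (hz1 : S1.sum id = 0) (hz2 : S2.sum id = 0) (hz3 : S3.sum id = 0)
    (h12 : S1 ≠ S2) (h13 : S1 ≠ S3) (h23 : S2 ≠ S3)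
    {p : Pt} (hp1 : p ∈ S1) (hp2 : p ∈ S2) (hp3 : p ∈ S3) : False := by
  have key : ∀ S T : Finset Pt, S.card = 3 → T.card = 3 → S.sum id = 0 →
      T.sum id = 0 → S ≠ T → p ∈ S → p ∈ T → Disjoint (S \ {p}) (T \ {p}) := by
    intro S T hS hT hs ht hne hpS hpT
    rw [Finset.disjoint_left]
    intro q hq1 hq2
    simp only [Finset.mem_sdiff, Finset.mem_singleton] at hq1 hq2
    exact hne (lemA2 hS hT hs ht (Ne.symm hq1.2) hpS hpT hq1.1 hq2.1)
  have d12 := key S1 S2 hc1 hc2 hz1 hz2 h12 hp1 hp2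
  have d13 := key S1 S3 hc1 hc3 hz1 hz3 h13 hp1 hp3
  have d23 := key S2 S3 hc2 hc3 hz2 hz3 h23 hp2 hp3
  have hU : ((S1 \ {p}) ∪ (S2 \ {p})) ∪ (S3 \ {p}) ⊆ B \ {p} := by
    intro x hx
    simp only [Finset.mem_union, Finset.mem_sdiff, Finset.mem_singleton] at hx ⊢
    rcases hx with (h | h) | h
    exacts [⟨hsub1 h.1, h.2⟩, ⟨hsub2 h.1, h.2⟩, ⟨hsub3 h.1, h.2⟩]
  have hcard : ∀ S : Finset Pt, S.card = 3 → p ∈ S → (S \ {p}).card = 2 := by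
    intro S hS hpS
    rw [Finset.card_sdiff_of_subset (Finset.singleton_subset_iff.mpr hpS), hS, Finset.card_singleton]
  have e1 := hcard S1 hc1 hp1
  have e2 := hcard S2 hc2 hp2
  have e3 := hcard S3 hc3 hp3
  have hu1 : ((S1 \ {p}) ∪ (S2 \ {p})).card = 4 := by
    rw [Finset.card_union_of_disjoint d12, e1, e2]
  have hu2 : (((S1 \ {p}) ∪ (S2 \ {p})) ∪ (S3 \ {p})).card = 6 := by
    rw [Finset.card_union_of_disjoint (Finset.disjoint_union_left.mpr ⟨d13, d23⟩), hu1, e3]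
  have hB5 : (B \ {p}).card = 5 := by
    rw [Finset.card_sdiff_of_subset (Finset.singleton_subset_iff.mpr (hsub1 hp1)), hB, Finset.card_singleton]
  have := Finset.card_le_card hU
  omega

-- Lemma C: any two of three distinct sets in a 6-board intersect
lemma lemC {B : Finset Pt} (hB : B.card = 6) {S1 S2 S3 : Finset Pt}
    (hsub1 : S1 ⊆ B) (hsub2 : S2 ⊆ B) (hsub3 : S3 ⊆ B)
    (hc1 : S1.card = 3) (hc2 : S2.card = 3) (hc3 : S3.card = 3)
    (hz1 : S1.sum id = 0) (hz2 : S2.sum id = 0) (hz3 : S3.sum id = 0)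
    (h12 : S1 ≠ S2) (h13 : S1 ≠ S3) (h23 : S2 ≠ S3) :
    (S1 ∩ S2).Nonempty := by
  rw [Finset.nonempty_iff_ne_empty]
  intro hemp
  have hdisj : Disjoint S1 S2 := Finset.disjoint_iff_inter_eq_empty.mpr hemp
  have hUB : S1 ∪ S2 = B := by
    apply Finset.eq_of_subset_of_card_le (Finset.union_subset hsub1 hsub2)
    rw [Finset.card_union_of_disjoint hdisj, hc1, hc2, hB]
  have hU3 : S3 ⊆ S1 ∪ S2 := hUB ▸ hsub3
  have hsplit : S3 = (S3 ∩ S1) ∪ (S3 ∩ S2) := by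
    rw [← Finset.inter_union_distrib_left, hUB]
    exact (Finset.inter_eq_left.mpr hsub3).symm
  have hle : S3.card ≤ (S3 ∩ S1).card + (S3 ∩ S2).card := by
    conv_lhs => rw [hsplit]
    exact Finset.card_union_le (S3 ∩ S1) (S3 ∩ S2)
  have b1 := lemA hc3 hc1 hz3 hz1 (Ne.symm h13)
  have b2 := lemA hc3 hc2 hz3 hz2 (Ne.symm h23)
  omega

-- Lemma D: intersection is a singleton
lemma lemD {B : Finset Pt} (hB : B.card = 6) {S1 S2 S3 : Finset Pt}
    (hsub1 : S1 ⊆ B) (hsub2 : S2 ⊆ B) (hsub3 : S3 ⊆ B)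
    (hc1 : S1.card = 3) (hc2 : S2.card = 3) (hc3 : S3.card = 3)
    (hz1 : S1.sum id = 0) (hz2 : S2.sum id = 0) (hz3 : S3.sum id = 0)
    (h12 : S1 ≠ S2) (h13 : S1 ≠ S3) (h23 : S2 ≠ S3) :
    ∃ p, S1 ∩ S2 = {p} := by
  have hne := lemC hB hsub1 hsub2 hsub3 hc1 hc2 hc3 hz1 hz2 hz3 h12 h13 h23
  have hle := lemA hc1 hc2 hz1 hz2 h12
  have : (S1 ∩ S2).card = 1 := le_antisymm hle (Finset.card_pos.mpr hne)
  exact Finset.card_eq_one.mp this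

lemma zmod3_cancel : ∀ a b : ZMod 3, a + a = b + b → a = b := by decide

theorem stmt5 (B : Finset Pt) (hB : B.card = 6) : numSets B ≤ 3 := by
  by_contra hlt
  push_neg at hlt
  unfold numSets at hlt
  set F := (B.powersetCard 3).filter (fun S => S.sum id = 0) with hF
  have hmem : ∀ S ∈ F, S ⊆ B ∧ S.card = 3 ∧ S.sum id = 0 := by
    intro S hS
    rw [hF, Finset.mem_filter, Finset.mem_powersetCard] at hS
    exact ⟨hS.1.1, hS.1.2, hS.2⟩
  obtain ⟨T, hTF, hT4⟩ := Finset.exists_subset_card_eq (show 4 ≤ F.card from hlt)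
  have hT4' : T.card = 3 + 1 := by omega
  obtain ⟨S1, t, hS1t, hins, ht3⟩ := Finset.card_eq_succ.mp hT4'
  obtain ⟨S2, S3, S4, n23, n24, n34, ht⟩ := Finset.card_eq_three.mp ht3
  subst ht
  have hS1T : S1 ∈ T := hins ▸ Finset.mem_insert_self _ _
  have hS2T : S2 ∈ T := hins ▸ by simp
  have hS3T : S3 ∈ T := hins ▸ by simp
  have hS4T : S4 ∈ T := hins ▸ by simp
  simp only [Finset.mem_insert, Finset.mem_singleton] at hS1t
  push_neg at hS1t
  obtain ⟨n12, n13, n14⟩ := hS1t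
  obtain ⟨b1, c1, z1⟩ := hmem S1 (hTF hS1T)
  obtain ⟨b2, c2, z2⟩ := hmem S2 (hTF hS2T)
  obtain ⟨b3, c3, z3⟩ := hmem S3 (hTF hS3T)
  obtain ⟨b4, c4, z4⟩ := hmem S4 (hTF hS4T)
  -- the six intersection points
  obtain ⟨p12, h12⟩ := lemD hB b1 b2 b3 c1 c2 c3 z1 z2 z3 n12 n13 n23
  obtain ⟨p13, h13⟩ := lemD hB b1 b3 b2 c1 c3 c2 z1 z3 z2 n13 n12 (Ne.symm n23)
  obtain ⟨p14, h14⟩ := lemD hB b1 b4 b2 c1 c4 c2 z1 z4 z2 n14 n12 (Ne.symm n24)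
  obtain ⟨p23, h23⟩ := lemD hB b2 b3 b1 c2 c3 c1 z2 z3 z1 n23 (Ne.symm n12) (Ne.symm n13)
  obtain ⟨p24, h24⟩ := lemD hB b2 b4 b1 c2 c4 c1 z2 z4 z1 n24 (Ne.symm n12) (Ne.symm n14)
  obtain ⟨p34, h34⟩ := lemD hB b3 b4 b1 c3 c4 c1 z3 z4 z1 n34 (Ne.symm n13) (Ne.symm n14)
  have m : ∀ {S T : Finset Pt} {p : Pt}, S ∩ T = {p} → p ∈ S ∧ p ∈ T := by
    intro S T p h
    have : p ∈ S ∩ T := h ▸ Finset.mem_singleton_self p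
    exact Finset.mem_inter.mp this
  obtain ⟨m12a, m12b⟩ := m h12
  obtain ⟨m13a, m13b⟩ := m h13
  obtain ⟨m14a, m14b⟩ := m h14
  obtain ⟨m23a, m23b⟩ := m h23
  obtain ⟨m24a, m24b⟩ := m h24
  obtain ⟨m34a, m34b⟩ := m h34
  -- distinctness of intersection points via lemB
  have q1213 : p12 ≠ p13 := fun h =>
    lemB hB b1 b2 b3 c1 c2 c3 z1 z2 z3 n12 n13 n23 m12a m12b (h ▸ m13b)
  have q1214 : p12 ≠ p14 := fun h =>
    lemB hB b1 b2 b4 c1 c2 c4 z1 z2 z4 n12 n14 n24 m12a m12b (h ▸ m14b)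
  have q1314 : p13 ≠ p14 := fun h =>
    lemB hB b1 b3 b4 c1 c3 c4 z1 z3 z4 n13 n14 n34 m13a m13b (h ▸ m14b)
  have q1223 : p12 ≠ p23 := fun h =>
    lemB hB b2 b1 b3 c2 c1 c3 z2 z1 z3 (Ne.symm n12) n23 n13 m12b m12a (h ▸ m23b)
  have q1224 : p12 ≠ p24 := fun h =>
    lemB hB b2 b1 b4 c2 c1 c4 z2 z1 z4 (Ne.symm n12) n24 n14 m12b m12a (h ▸ m24b)
  have q2324 : p23 ≠ p24 := fun h =>
    lemB hB b2 b3 b4 c2 c3 c4 z2 z3 z4 n23 n24 n34 m23a m23b (h ▸ m24b)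
  have q1323 : p13 ≠ p23 := fun h =>
    lemB hB b3 b1 b2 c3 c1 c2 z3 z1 z2 (Ne.symm n13) (Ne.symm n23) n12 m13b m13a (h ▸ m23a)
  have q1334 : p13 ≠ p34 := fun h =>
    lemB hB b3 b1 b4 c3 c1 c4 z3 z1 z4 (Ne.symm n13) n34 n14 m13b m13a (h ▸ m34b)
  have q2334 : p23 ≠ p34 := fun h =>
    lemB hB b3 b2 b4 c3 c2 c4 z3 z2 z4 (Ne.symm n23) n34 n24 m23b m23a (h ▸ m34b)
  have q1424 : p14 ≠ p24 := fun h =>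
    lemB hB b4 b1 b2 c4 c1 c2 z4 z1 z2 (Ne.symm n14) (Ne.symm n24) n12 m14b m14a (h ▸ m24a)
  have q1434 : p14 ≠ p34 := fun h =>
    lemB hB b4 b1 b3 c4 c1 c3 z4 z1 z3 (Ne.symm n14) (Ne.symm n34) n13 m14b m14a (h ▸ m34a)
  have q2434 : p24 ≠ p34 := fun h =>
    lemB hB b4 b2 b3 c4 c2 c3 z4 z2 z3 (Ne.symm n24) (Ne.symm n34) n23 m24b m24a (h ▸ m34a)
  have q1234 : p12 ≠ p34 := fun h =>
    lemB hB b1 b2 b3 c1 c2 c3 z1 z2 z3 n12 n13 n23 m12a m12b (h ▸ m34a)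
  -- each set equals its triple of intersection points
  have triple : ∀ (S : Finset Pt) (a b c : Pt), S.card = 3 → a ≠ b → a ≠ c → b ≠ c →
      a ∈ S → b ∈ S → c ∈ S → S.sum id = a + b + c := by
    intro S a b c hc hab hac hbc ha hb hcS
    have hsub : ({a, b, c} : Finset Pt) ⊆ S := by
      intro x hx
      simp only [Finset.mem_insert, Finset.mem_singleton] at hx
      rcases hx with rfl | rfl | rfl <;> assumption
    have hcard : ({a, b, c} : Finset Pt).card = 3 := by
      rw [Finset.card_insert_of_notMem (by simp [hab, hac]),
        Finset.card_insert_of_notMem (by simp [hbc]), Finset.card_singleton]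
    have hEq : S = {a, b, c} := (Finset.eq_of_subset_of_card_le hsub (by omega)).symm
    rw [hEq, Finset.sum_insert (by simp [hab, hac]), Finset.sum_pair hbc]
    simp [add_assoc]
  have e1 : p12 + p13 + p14 = 0 := by
    rw [← triple S1 p12 p13 p14 c1 q1213 q1214 q1314 m12a m13a m14a]; exact z1
  have e2 : p12 + p23 + p24 = 0 := by
    rw [← triple S2 p12 p23 p24 c2 q1223 q1224 q2324 m12b m23a m24a]; exact z2
  have e3 : p13 + p23 + p34 = 0 := by
    rw [← triple S3 p13 p23 p34 c3 q1323 q1334 q2334 m13b m23b m34a]; exact z3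
  have e4 : p14 + p24 + p34 = 0 := by
    rw [← triple S4 p14 p24 p34 c4 q1424 q1434 q2434 m14b m24b m34b]; exact z4
  apply q1234
  have hsum : p12 + p12 = p34 + p34 := by
    linear_combination e1 + e2 - e3 - e4
  funext i
  exact zmod3_cancel _ _ (congrFun hsum i)
end

section
/- Any board of 9 distinct points in F_3^4 contains at most 12 sets, and the bound is achieved exactly when the board is a 2-dimensional affine subspace (magic square). -/
open Finset

lemma three_eq_zero (x : Pt) : x + x + x = 0 := by
  funext i
  show x i + x i + x i = 0
  have h3 : (3 : ZMod 3) = 0 := rfl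
  linear_combination (x i) * h3

def lineFam (B : Finset Pt) : Finset (Finset Pt) :=
  (B.powersetCard 3).filter (fun S => S.sum id = 0)

lemma numSets_eq (B : Finset Pt) : numSets B = (lineFam B).card := rfl

lemma mem_lineFam {B S : Finset Pt} :
    S ∈ lineFam B ↔ S ⊆ B ∧ S.card = 3 ∧ S.sum id = 0 := by
  simp [lineFam, Finset.mem_powersetCard, and_assoc]

def thru (B : Finset Pt) (p : Pt) : Finset (Finset Pt) :=
  (lineFam B).filter (fun S => p ∈ S)

lemma third_ne_left {p q : Pt} (hpq : p ≠ q) : -p - q ≠ p := by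
  intro h
  apply hpq
  have h3 := three_eq_zero p
  linear_combination h + h3

lemma third_ne_right {p q : Pt} (hpq : p ≠ q) : -p - q ≠ q := by
  intro h
  apply hpq
  have h3 := three_eq_zero q
  linear_combination -h - h3

lemma sum_triple {p q r : Pt} (hpq : p ≠ q) (hpr : p ≠ r) (hqr : q ≠ r) :
    ({p, q, r} : Finset Pt).sum id = p + q + r := by
  rw [Finset.sum_insert (by simp [hpq, hpr]), Finset.sum_insert (by simp [hqr]),
    Finset.sum_singleton]
  simp only [id_eq]
  ring

lemma line_eq {S : Finset Pt} {p q : Pt} (h3 : S.card = 3) (hsum : S.sum id = 0)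
    (hp : p ∈ S) (hq : q ∈ S) (hpq : p ≠ q) : S = {p, q, -p - q} := by
  have hsub : ({p, q} : Finset Pt) ⊆ S := by
    intro x hx
    rcases Finset.mem_insert.mp hx with rfl | hx
    · exact hp
    · rw [Finset.mem_singleton] at hx; exact hx ▸ hq
  have h1 : (S \ {p, q}).card = 1 := by
    rw [Finset.card_sdiff_of_subset hsub, h3, Finset.card_pair hpq]
  obtain ⟨r, hr⟩ := Finset.card_eq_one.mp h1
  have hrmem : r ∈ S \ ({p, q} : Finset Pt) := by rw [hr]; simp
  rw [Finset.mem_sdiff, Finset.mem_insert, Finset.mem_singleton] at hrmem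
  obtain ⟨hrS, hrpq⟩ := hrmem
  push_neg at hrpq
  have hSeq : S = {p, q, r} := by
    have := Finset.union_sdiff_of_subset hsub
    rw [hr] at this
    rw [← this]
    ext x; simp [or_assoc]
  rw [hSeq] at hsum
  rw [sum_triple hpq (Ne.symm hrpq.1) (Ne.symm hrpq.2)] at hsum
  have hreq : r = -p - q := by linear_combination hsum
  rw [hSeq, hreq]

lemma thru_biUnion_card (B : Finset Pt) (p : Pt) :
    ((thru B p).biUnion (fun S => S.erase p)).card = 2 * (thru B p).card := by
  rw [Finset.card_biUnion]
  · rw [Finset.sum_congr rfl (g := fun _ => 2), Finset.sum_const, smul_eq_mul, mul_comm]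
    intro S hS
    rw [thru, Finset.mem_filter] at hS
    obtain ⟨hS, hpS⟩ := hS
    rw [mem_lineFam] at hS
    rw [Finset.card_erase_of_mem hpS, hS.2.1]
  · intro S hS T hT hST
    rw [thru, Finset.mem_coe, Finset.mem_filter, mem_lineFam] at hS hT
    rw [Function.onFun, Finset.disjoint_left]
    intro q hqS hqT
    apply hST
    have hqp : q ≠ p := Finset.ne_of_mem_erase hqS
    have e1 := line_eq hS.1.2.1 hS.1.2.2 hS.2 (Finset.mem_of_mem_erase hqS) (Ne.symm hqp)
    have e2 := line_eq hT.1.2.1 hT.1.2.2 hT.2 (Finset.mem_of_mem_erase hqT) (Ne.symm hqp)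
    rw [e1, e2]

lemma thru_biUnion_subset (B : Finset Pt) (p : Pt) :
    (thru B p).biUnion (fun S => S.erase p) ⊆ B.erase p := by
  intro x hx
  rw [Finset.mem_biUnion] at hx
  obtain ⟨S, hS, hxS⟩ := hx
  rw [thru, Finset.mem_filter, mem_lineFam] at hS
  exact Finset.mem_erase.mpr ⟨Finset.ne_of_mem_erase hxS, hS.1.1 (Finset.mem_of_mem_erase hxS)⟩

lemma thru_card_le {B : Finset Pt} (hB : B.card = 9) {p : Pt} :
    (thru B p).card ≤ 4 := by
  by_cases hp : p ∈ B
  · have h1 := thru_biUnion_card B p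
    have h2 := Finset.card_le_card (thru_biUnion_subset B p)
    have h3 : (B.erase p).card = 8 := by rw [Finset.card_erase_of_mem hp, hB]
    omega
  · have : thru B p = ∅ := by
      ext S
      simp only [thru, Finset.mem_filter, mem_lineFam, Finset.notMem_empty, iff_false]
      rintro ⟨⟨hSB, -, -⟩, hpS⟩
      exact hp (hSB hpS)
    rw [this]
    simp

lemma count3 (B : Finset Pt) : 3 * (lineFam B).card = ∑ p ∈ B, (thru B p).card := by
  have h1 : ∀ p, (thru B p).card = ∑ S ∈ lineFam B, if p ∈ S then 1 else 0 := by
    intro p; rw [thru, Finset.card_filter]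
  simp_rw [h1]
  rw [Finset.sum_comm]
  rw [Finset.sum_congr rfl (g := fun _ => 3), Finset.sum_const, smul_eq_mul, mul_comm]
  intro S hS
  rw [mem_lineFam] at hS
  rw [Finset.sum_ite_mem, Finset.inter_eq_right.mpr hS.1, Finset.sum_const, smul_eq_mul, mul_one,
    hS.2.1]

/-- Under the closure property, every board point lies on exactly 4 lines. -/
lemma thru_card_eq {B : Finset Pt} (hB : B.card = 9)
    (hcl : ∀ a ∈ B, ∀ b ∈ B, -a - b ∈ B) {p : Pt} (hp : p ∈ B) :
    (thru B p).card = 4 := by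
  have heq : (thru B p).biUnion (fun S => S.erase p) = B.erase p := by
    apply Finset.Subset.antisymm (thru_biUnion_subset B p)
    intro q hq
    rw [Finset.mem_erase] at hq
    obtain ⟨hqp, hqB⟩ := hq
    have hpq : p ≠ q := Ne.symm hqp
    have hthird : -p - q ∈ B := hcl p hp q hqB
    have hScard : ({p, q, -p - q} : Finset Pt).card = 3 := by
      rw [Finset.card_insert_of_notMem (by simp [hpq, Ne.symm (third_ne_left hpq)]),
        Finset.card_insert_of_notMem (by simp [Ne.symm (third_ne_right hpq)]),
        Finset.card_singleton]
    have hSmem : ({p, q, -p - q} : Finset Pt) ∈ thru B p := by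
      rw [thru, Finset.mem_filter, mem_lineFam]
      refine ⟨⟨?_, hScard, ?_⟩, by simp⟩
      · intro x hx
        rcases Finset.mem_insert.mp hx with rfl | hx
        · exact hp
        rcases Finset.mem_insert.mp hx with rfl | hx
        · exact hqB
        · rw [Finset.mem_singleton] at hx; exact hx ▸ hthird
      · rw [sum_triple hpq (Ne.symm (third_ne_left hpq)) (Ne.symm (third_ne_right hpq))]
        ring
    rw [Finset.mem_biUnion]
    exact ⟨{p, q, -p - q}, hSmem, by simp [hqp]⟩
  have h1 := thru_biUnion_card B p
  rw [heq, Finset.card_erase_of_mem hp, hB] at h1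
  omega

lemma closed_of_numSets {B : Finset Pt} (hB : B.card = 9) (h12 : numSets B = 12) :
    ∀ a ∈ B, ∀ b ∈ B, -a - b ∈ B := by
  have hsum : ∑ p ∈ B, (thru B p).card = 36 := by
    rw [← count3, ← numSets_eq, h12]
  have hle : ∀ p ∈ B, (thru B p).card ≤ 4 := fun p _ => thru_card_le hB
  have hall : ∀ p ∈ B, (thru B p).card = 4 := by
    by_contra h
    push_neg at h
    obtain ⟨p, hp, hne⟩ := h
    have hlt : (thru B p).card < 4 := lt_of_le_of_ne (hle p hp) hne
    have : ∑ q ∈ B, (thru B q).card < ∑ q ∈ B, 4 :=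
      Finset.sum_lt_sum hle ⟨p, hp, hlt⟩
    rw [Finset.sum_const, hB, smul_eq_mul] at this
    omega
  intro a ha b hb
  by_cases hab : a = b
  · subst hab
    have : -a - a = a := by
      have h3 := three_eq_zero a
      linear_combination -h3
    rw [this]; exact ha
  · have heq : (thru B a).biUnion (fun S => S.erase a) = B.erase a := by
      apply Finset.eq_of_subset_of_card_le (thru_biUnion_subset B a)
      rw [thru_biUnion_card, hall a ha, Finset.card_erase_of_mem ha, hB]
    have hbmem : b ∈ (thru B a).biUnion (fun S => S.erase a) := by
      rw [heq, Finset.mem_erase]; exact ⟨Ne.symm hab, hb⟩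
    rw [Finset.mem_biUnion] at hbmem
    obtain ⟨S, hS, hbS⟩ := hbmem
    rw [thru, Finset.mem_filter, mem_lineFam] at hS
    have e := line_eq hS.1.2.1 hS.1.2.2 hS.2 (Finset.mem_of_mem_erase hbS) hab
    apply hS.1.1
    rw [e]
    simp

lemma magic_of_closed {B : Finset Pt} (hB : B.card = 9)
    (hcl : ∀ a ∈ B, ∀ b ∈ B, -a - b ∈ B) : IsMagicSquare B := by
  have hne : B.Nonempty := by rw [← Finset.card_pos, hB]; norm_num
  obtain ⟨p₀, hp₀⟩ := hne
  set Vs : Set Pt := (fun b => b - p₀) '' (B : Set Pt) with hVs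
  have hmemV : ∀ v, v ∈ Vs ↔ v + p₀ ∈ B := by
    intro v
    constructor
    · rintro ⟨b, hb, rfl⟩; simpa using hb
    · intro h; exact ⟨v + p₀, h, by ring⟩
  have hnegmem : ∀ v ∈ Vs, -v ∈ Vs := by
    intro v hv
    rw [hmemV] at hv ⊢
    have := hcl p₀ hp₀ _ hv
    have heq : -p₀ - (v + p₀) = -v + p₀ := by
      have h3 := three_eq_zero p₀
      linear_combination -h3
    rwa [heq] at this
  have haddmem : ∀ v ∈ Vs, ∀ w ∈ Vs, v + w ∈ Vs := by
    intro v hv w hw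
    rw [hmemV] at hv hw ⊢
    have h1 : -(v + p₀) - (w + p₀) ∈ B := hcl _ hv _ hw
    have h2 : -p₀ - (-(v + p₀) - (w + p₀)) ∈ B := hcl p₀ hp₀ _ h1
    have heq : -p₀ - (-(v + p₀) - (w + p₀)) = v + w + p₀ := by
      have h3 := three_eq_zero p₀
      ring
    rwa [heq] at h2
  let W : Submodule (ZMod 3) Pt :=
    { carrier := Vs
      zero_mem' := by rw [hmemV]; simpa using hp₀
      add_mem' := fun {v w} hv hw => haddmem v hv w hw
      smul_mem' := by
        intro c v hv
        have hc : c = 0 ∨ c = 1 ∨ c = 2 := by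
          revert c; decide
        rcases hc with rfl | rfl | rfl
        · rw [zero_smul]; rw [hmemV]; simpa using hp₀
        · rw [one_smul]; exact hv
        · have : (2 : ZMod 3) • v = v + v := by
            rw [show (2 : ZMod 3) = 1 + 1 from rfl, add_smul, one_smul]
          rw [this]; exact haddmem v hv v hv }
  refine ⟨p₀, W, ?_, ?_⟩
  · -- finrank = 2 since card W = 9
    have : Finite W := Subtype.finite
    have : Fintype W := Fintype.ofFinite W
    have hcard : Fintype.card W = 9 := by
      have hinj : Function.Injective (fun b : Pt => b - p₀) := by
        intro a b h
        linear_combination h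
      have : Nat.card W = 9 := by
        have e : Nat.card W = Nat.card Vs := rfl
        rw [e, Nat.card_coe_set_eq, hVs,
          Set.ncard_image_of_injective _ hinj, Set.ncard_coe_finset, hB]
      rwa [Nat.card_eq_fintype_card] at this
    have hpow := Module.card_eq_pow_finrank (K := ZMod 3) (V := W)
    rw [hcard, ZMod.card] at hpow
    have : (9 : ℕ) = 3 ^ 2 := by norm_num
    rw [this] at hpow
    exact (Nat.pow_right_injective (by norm_num) hpow.symm)
  · ext x
    simp only [Finset.coe_sort_coe, Set.mem_image, SetLike.mem_coe]
    constructor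
    · intro hx
      refine ⟨x - p₀, ?_, by ring⟩
      show x - p₀ ∈ Vs
      rw [hmemV]
      have : x - p₀ + p₀ = x := by ring
      rwa [this]
    · rintro ⟨v, hv, rfl⟩
      have : v ∈ Vs := hv
      rw [hmemV] at this
      have heq : v + p₀ = p₀ + v := by ring
      rwa [heq] at this

lemma closed_of_magic {B : Finset Pt} (hm : IsMagicSquare B) :
    ∀ a ∈ B, ∀ b ∈ B, -a - b ∈ B := by
  obtain ⟨p, V, _, hset⟩ := hm
  intro a ha b hb
  have ha' : a ∈ (fun v => p + v) '' (V : Set Pt) := by rw [← hset]; exact ha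
  have hb' : b ∈ (fun v => p + v) '' (V : Set Pt) := by rw [← hset]; exact hb
  obtain ⟨va, hva, rfl⟩ := ha'
  obtain ⟨vb, hvb, rfl⟩ := hb'
  have : -(p + va) - (p + vb) ∈ (fun v => p + v) '' (V : Set Pt) := by
    refine ⟨-va - vb, V.sub_mem (V.neg_mem hva) hvb, ?_⟩
    have h3 := three_eq_zero p
    linear_combination h3
  rw [← hset] at this
  exact this

theorem stmt11 (B : Finset Pt) (hB : B.card = 9) :
    numSets B ≤ 12 ∧ (numSets B = 12 ↔ IsMagicSquare B) := by
  have hcount := count3 B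
  constructor
  · have h36 : 3 * numSets B ≤ 36 := by
      rw [numSets_eq, hcount]
      calc ∑ p ∈ B, (thru B p).card ≤ ∑ p ∈ B, 4 :=
            Finset.sum_le_sum (fun p _ => thru_card_le hB)
        _ = 36 := by rw [Finset.sum_const, hB]; rfl
    omega
  constructor
  · intro h12
    exact magic_of_closed hB (closed_of_numSets hB h12)
  · intro hm
    have hcl := closed_of_magic hm
    have h36 : 3 * numSets B = 36 := by
      rw [numSets_eq, hcount, Finset.sum_congr rfl (fun p hp => thru_card_eq hB hcl hp),
        Finset.sum_const, hB]
      rfl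
    omega
end

section
/- Any board of 8 distinct points in F_3^4 contains at most 8 sets. -/
lemma three_eq (S : Finset Pt) (h3 : S.card = 3) (h0 : S.sum id = 0)
    {p q : Pt} (hp : p ∈ S) (hq : q ∈ S) (hpq : p ≠ q) :
    S = {p, q, -(p+q)} := by
  have hq1 : q ∈ S.erase p := Finset.mem_erase.mpr ⟨fun h => hpq h.symm, hq⟩
  have hc1 : ((S.erase p).erase q).card = 1 := by
    rw [Finset.card_erase_of_mem hq1, Finset.card_erase_of_mem hp, h3]
  obtain ⟨r, hr⟩ := Finset.card_eq_one.mp hc1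
  have hrS : r ∈ (S.erase p).erase q := by rw [hr]; exact Finset.mem_singleton_self r
  have hrq : r ≠ q := (Finset.mem_erase.mp hrS).1
  have hrp : r ≠ p := (Finset.mem_erase.mp (Finset.mem_erase.mp hrS).2).1
  have hS : S = insert p (insert q {r}) := by
    rw [← hr, Finset.insert_erase hq1, Finset.insert_erase hp]
  have hsum : p + q + r = 0 := by
    have h1 : S.sum id = p + (q + r) := by
      rw [hS, Finset.sum_insert (by simp [hpq, hrp.symm]),
        Finset.sum_insert (by simp [hrq.symm]), Finset.sum_singleton]
      rfl
    rw [h0] at h1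
    linear_combination -h1
  have hr' : r = -(p+q) := by linear_combination hsum
  rw [hS, hr']

theorem stmt12 (B : Finset Pt) (hB : B.card = 8) : numSets B ≤ 8 := by
  classical
  set L := (B.powersetCard 3).filter (fun S => S.sum id = 0) with hL
  have hmem : ∀ S ∈ L, S ⊆ B ∧ S.card = 3 ∧ S.sum id = 0 := by
    intro S hS
    simp only [hL, Finset.mem_filter, Finset.mem_powersetCard] at hS
    exact ⟨hS.1.1, hS.1.2, hS.2⟩
  have key : 3 * L.card = ∑ p ∈ B, (L.filter (fun S => p ∈ S)).card := by
    calc 3 * L.card = ∑ S ∈ L, 3 := by rw [Finset.sum_const, smul_eq_mul, mul_comm]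
    _ = ∑ S ∈ L, ∑ p ∈ B, (if p ∈ S then 1 else 0) := by
        apply Finset.sum_congr rfl
        intro S hS
        obtain ⟨hSB, h3, _⟩ := hmem S hS
        have h1 : ∑ p ∈ B, (if p ∈ S then 1 else 0) = (B.filter (fun p => p ∈ S)).card :=
          (Finset.card_filter _ _).symm
        rw [h1, Finset.filter_mem_eq_inter, Finset.inter_eq_right.mpr hSB, h3]
    _ = ∑ p ∈ B, ∑ S ∈ L, (if p ∈ S then 1 else 0) := Finset.sum_comm
    _ = ∑ p ∈ B, (L.filter (fun S => p ∈ S)).card := by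
        apply Finset.sum_congr rfl
        intro p _
        exact (Finset.card_filter _ _).symm
  have bound : ∀ p ∈ B, (L.filter (fun S => p ∈ S)).card ≤ 3 := by
    intro p hp
    set Lp := L.filter (fun S => p ∈ S) with hLp
    have hmem' : ∀ S ∈ Lp, S ⊆ B ∧ S.card = 3 ∧ S.sum id = 0 ∧ p ∈ S := by
      intro S hS
      rw [hLp, Finset.mem_filter] at hS
      obtain ⟨h1, h2, h3⟩ := hmem S hS.1
      exact ⟨h1, h2, h3, hS.2⟩
    have hdisj : ∀ S ∈ Lp, ∀ T ∈ Lp, S ≠ T → Disjoint (S.erase p) (T.erase p) := by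
      intro S hS T hT hST
      by_contra h
      obtain ⟨q, hqS, hqT⟩ := Finset.not_disjoint_iff.mp h
      obtain ⟨_, hS3, hS0, hpS⟩ := hmem' S hS
      obtain ⟨_, hT3, hT0, hpT⟩ := hmem' T hT
      have hqp : q ≠ p := (Finset.mem_erase.mp hqS).1
      have e1 := three_eq S hS3 hS0 hpS (Finset.mem_of_mem_erase hqS) (Ne.symm hqp)
      have e2 := three_eq T hT3 hT0 hpT (Finset.mem_of_mem_erase hqT) (Ne.symm hqp)
      exact hST (e1.trans e2.symm)
    have hcard : (Lp.biUnion (fun S => S.erase p)).card = 2 * Lp.card := by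
      rw [Finset.card_biUnion hdisj]
      rw [Finset.sum_congr rfl (fun S hS => ?_), Finset.sum_const, smul_eq_mul, mul_comm]
      obtain ⟨_, h3, _, hpS⟩ := hmem' S hS
      rw [Finset.card_erase_of_mem hpS, h3]
    have hsub : Lp.biUnion (fun S => S.erase p) ⊆ B.erase p := by
      intro q hq
      obtain ⟨S, hS, hqS⟩ := Finset.mem_biUnion.mp hq
      obtain ⟨hSB, _, _, _⟩ := hmem' S hS
      exact Finset.mem_erase.mpr ⟨(Finset.mem_erase.mp hqS).1,
        hSB (Finset.mem_of_mem_erase hqS)⟩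
    have h7 : (B.erase p).card = 7 := by rw [Finset.card_erase_of_mem hp, hB]
    have := Finset.card_le_card hsub
    rw [hcard, h7] at this
    omega
  have : 3 * L.card ≤ ∑ p ∈ B, 3 := by
    rw [key]; exact Finset.sum_le_sum bound
  rw [Finset.sum_const, hB, smul_eq_mul] at this
  have hns : numSets B = L.card := rfl
  omega
end

section
/- Removing one point from a 2-dimensional affine subspace of F_3^4 yields an 8-point board containing exactly 8 sets, with each of the 8 points lying in exactly 3 sets. -/
abbrev W := Fin 2 → ZMod 3

set_option maxRecDepth 100000 in
lemma small1 : ∀ w0 : W, (((Finset.univ.erase w0).powersetCard 3).filter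
    (fun S => S.sum id = 0)).card = 8 := by decide

set_option maxRecDepth 100000 in
lemma small2 : ∀ w0 w1 : W, w1 ≠ w0 → (((Finset.univ.erase w0).powersetCard 3).filter
    (fun S => w1 ∈ S ∧ S.sum id = 0)).card = 3 := by decide

theorem stmt13 (B : Finset Pt) (hB : IsMagicSquare B) (x : Pt) (hx : x ∈ B) :
    numSets (B.erase x) = 8 ∧
    ∀ y ∈ B.erase x,
      (((B.erase x).powersetCard 3).filter (fun S => y ∈ S ∧ S.sum id = 0)).card = 3 := by
  obtain ⟨p, V, hV, hBV⟩ := hB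
  have hW : Module.finrank (ZMod 3) W = 2 := by simp
  obtain ⟨e⟩ := FiniteDimensional.nonempty_linearEquiv_of_finrank_eq
    (R := ZMod 3) (M := V) (M' := W) (hV.trans hW.symm)
  have hFinj : Function.Injective (fun w : W => p + ((e.symm w : V) : Pt)) := by
    intro a b hab
    simp only [add_right_inj] at hab
    exact e.symm.injective (Subtype.val_injective hab)
  set emb : W ↪ Pt := ⟨fun w => p + ((e.symm w : V) : Pt), hFinj⟩ with hemb
  have hBeq : B = Finset.univ.map emb := by
    apply Finset.coe_injective
    rw [hBV]
    simp only [Finset.coe_map, Finset.coe_univ, Set.image_univ]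
    ext z
    constructor
    · rintro ⟨v, hv, rfl⟩
      exact ⟨e ⟨v, hv⟩, by simp [hemb]⟩
    · rintro ⟨w, rfl⟩
      exact ⟨((e.symm w : V) : Pt), (e.symm w).2, rfl⟩
  obtain ⟨w0, -, hw0⟩ : ∃ w0 ∈ Finset.univ, emb w0 = x := by
    rw [hBeq] at hx; exact Finset.mem_map.mp hx
  have herase : B.erase x = (Finset.univ.erase w0).map emb := by
    rw [hBeq, ← hw0, Finset.map_erase]
  -- sum transport
  have hsum : ∀ S : Finset W, S ∈ (Finset.univ.erase w0).powersetCard 3 →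
      ((S.map emb).sum id = 0 ↔ S.sum id = 0) := by
    intro S hS
    have hcard : S.card = 3 := (Finset.mem_powersetCard.mp hS).2
    rw [Finset.sum_map]
    have h1 : ∑ w ∈ S, id (emb w)
        = S.card • p + ((e.symm (S.sum id) : V) : Pt) := by
      simp only [hemb, Function.Embedding.coeFn_mk, id]
      rw [Finset.sum_add_distrib, Finset.sum_const]
      congr 1
      rw [← Submodule.coe_sum, ← map_sum]
      try rfl
    rw [h1, hcard]
    have h3 : (3 : ℕ) • p = 0 := by
      have h0 : ((3:ℕ):ZMod 3) = 0 := by decide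
      rw [← Nat.cast_smul_eq_nsmul (ZMod 3), h0, zero_smul]
    rw [h3, zero_add]
    rw [ZeroMemClass.coe_eq_zero, LinearEquiv.map_eq_zero_iff]
  constructor
  · rw [numSets, herase, Finset.powersetCard_map, Finset.filter_map, Finset.card_map]
    simp only [Function.comp_def, RelEmbedding.coe_toEmbedding, Finset.mapEmbedding_apply]
    exact (congrArg Finset.card (Finset.filter_congr (q := fun S => S.sum id = 0) (fun S hS => hsum S hS))).trans (small1 w0)
  · intro y hy
    rw [herase] at hy
    obtain ⟨w1, hw1, rfl⟩ := Finset.mem_map.mp hy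
    have hw1ne : w1 ≠ w0 := (Finset.mem_erase.mp hw1).1
    rw [herase, Finset.powersetCard_map, Finset.filter_map, Finset.card_map]
    simp only [Function.comp_def, RelEmbedding.coe_toEmbedding, Finset.mapEmbedding_apply]
    exact (congrArg Finset.card (Finset.filter_congr (q := fun S => w1 ∈ S ∧ S.sum id = 0) (fun S hS =>
      and_congr (Finset.mem_map' emb) (hsum S hS)))).trans (small2 w0 w1 hw1ne)
end

section
/- Any board of 10 distinct points in F_3^4 contains at most 12 sets. -/
namespace Cap

def lines (B : Finset Pt) : Finset (Finset Pt) :=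
  (B.powersetCard 3).filter (fun S => S.sum id = 0)

lemma numSets_eq (B : Finset Pt) : numSets B = (lines B).card := rfl

lemma mem_lines {B : Finset Pt} {S : Finset Pt} :
    S ∈ lines B ↔ S ⊆ B ∧ S.card = 3 ∧ S.sum id = 0 := by
  simp [lines, Finset.mem_powersetCard, and_assoc]

lemma tri (x : Pt) : x + x + x = 0 := by
  funext i
  show x i + x i + x i = 0
  have : ∀ v : ZMod 3, v + v + v = 0 := by decide
  exact this _

lemma two_eq_neg (x : Pt) : x + x = -x := by
  exact eq_neg_of_add_eq_zero_left (tri x)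

lemma eq_zero_of_double {x : Pt} (h : x + x = 0) : x = 0 := by
  have := tri x
  rw [h] at this
  simpa using this

lemma neg_ne {x : Pt} (hx : x ≠ 0) : x ≠ -x := by
  intro h
  apply hx
  apply eq_zero_of_double
  nth_rewrite 2 [h]
  exact add_neg_cancel x

lemma line_eq {B S : Finset Pt} {p q : Pt} (hS : S ∈ lines B) (hp : p ∈ S) (hq : q ∈ S)
    (hpq : p ≠ q) : S = {p, q, -p - q} := by
  obtain ⟨-, h3, hsum⟩ := mem_lines.mp hS
  have hsub : ({p, q} : Finset Pt) ⊆ S := by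
    intro x hx
    rcases Finset.mem_insert.mp hx with rfl | hx
    · exact hp
    · rw [Finset.mem_singleton.mp hx]; exact hq
  have hc : (S \ {p, q}).card = 1 := by
    rw [Finset.card_sdiff_of_subset hsub, h3, Finset.card_pair hpq]
  obtain ⟨r, hr⟩ := Finset.card_eq_one.mp hc
  have hrmem : r ∈ S \ {p, q} := by rw [hr]; exact Finset.mem_singleton_self r
  have hrS : r ∈ S := (Finset.mem_sdiff.mp hrmem).1
  have hrpq : r ≠ p ∧ r ≠ q := by
    have := (Finset.mem_sdiff.mp hrmem).2
    simp only [Finset.mem_insert, Finset.mem_singleton] at this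
    tauto
  have hS' : S = {p, q, r} := by
    have h1 := Finset.union_sdiff_of_subset hsub
    rw [hr] at h1
    rw [← h1]
    ext x
    simp [or_assoc]
  have hsum' : p + q + r = 0 := by
    rw [hS'] at hsum
    rw [Finset.sum_insert (by simp [hpq, hrpq.1.symm]),
        Finset.sum_insert (by simp [hrpq.2.symm]), Finset.sum_singleton] at hsum
    simpa [add_assoc] using hsum
  have hreq : r = -p - q := by
    have := neg_eq_of_add_eq_zero_right hsum'
    rw [← this]
    abel
  rw [hS', hreq]

lemma line_unique {B S S' : Finset Pt} {p q : Pt} (hS : S ∈ lines B) (hS' : S' ∈ lines B)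
    (hpS : p ∈ S) (hqS : q ∈ S) (hpS' : p ∈ S') (hqS' : q ∈ S') (hpq : p ≠ q) : S = S' := by
  rw [line_eq hS hpS hqS hpq, line_eq hS' hpS' hqS' hpq]

lemma doubleCount (A : Finset Pt) (F : Finset (Finset Pt)) :
    ∑ x ∈ A, (F.filter (fun S => x ∈ S)).card = ∑ S ∈ F, (A.filter (fun x => x ∈ S)).card := by
  simp only [Finset.card_filter]
  exact Finset.sum_comm

def deg (B : Finset Pt) (p : Pt) : ℕ := ((lines B).filter (fun S => p ∈ S)).card

lemma sum_deg (B : Finset Pt) : ∑ p ∈ B, deg B p = 3 * (lines B).card := by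
  unfold deg
  rw [doubleCount]
  have h : ∀ S ∈ lines B, (B.filter (fun x => x ∈ S)).card = 3 := by
    intro S hS
    obtain ⟨hsub, h3, -⟩ := mem_lines.mp hS
    rw [Finset.filter_mem_eq_inter, Finset.inter_eq_right.mpr hsub, h3]
  rw [Finset.sum_congr rfl h, Finset.sum_const, smul_eq_mul, mul_comm]

lemma deg_le (B : Finset Pt) (p : Pt) : 2 * deg B p ≤ (B.erase p).card := by
  classical
  set F := (lines B).filter (fun S => p ∈ S) with hF
  have hdisj : ∀ S ∈ F, ∀ S' ∈ F, S ≠ S' → Disjoint (S.erase p) (S'.erase p) := by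
    intro S hS S' hS' hne
    rw [Finset.disjoint_left]
    intro q hq hq'
    obtain ⟨hSl, hpS⟩ := Finset.mem_filter.mp hS
    obtain ⟨hS'l, hpS'⟩ := Finset.mem_filter.mp hS'
    exact hne (line_unique hSl hS'l hpS (Finset.mem_of_mem_erase hq) hpS'
      (Finset.mem_of_mem_erase hq') (Ne.symm (Finset.ne_of_mem_erase hq)))
  have hcard : ∀ S ∈ F, (S.erase p).card = 2 := by
    intro S hS
    obtain ⟨hSl, hpS⟩ := Finset.mem_filter.mp hS
    rw [Finset.card_erase_of_mem hpS, (mem_lines.mp hSl).2.1]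
  calc 2 * F.card = ∑ S ∈ F, (S.erase p).card := by
        rw [Finset.sum_congr rfl hcard, Finset.sum_const, smul_eq_mul, mul_comm]
      _ = (F.biUnion (fun S => S.erase p)).card := (Finset.card_biUnion hdisj).symm
      _ ≤ (B.erase p).card := by
        apply Finset.card_le_card
        intro x hx
        obtain ⟨S, hS, hxS⟩ := Finset.mem_biUnion.mp hx
        obtain ⟨hSl, -⟩ := Finset.mem_filter.mp hS
        exact Finset.mem_erase.mpr ⟨Finset.ne_of_mem_erase hxS,
          (mem_lines.mp hSl).1 (Finset.mem_of_mem_erase hxS)⟩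

lemma smul_three (x : Pt) : (3 : ℕ) • x = 0 := by
  have h := tri x
  have : x + x + x = (3 : ℕ) • x := by abel
  rwa [this] at h

lemma image_line {B S : Finset Pt} (c : Pt) (hS : S ∈ lines B) :
    S.image (· + c) ∈ lines (B.image (· + c)) := by
  obtain ⟨hsub, h3, hsum⟩ := mem_lines.mp hS
  have hinj : Function.Injective (fun x : Pt => x + c) := fun a b h => by simpa using h
  refine mem_lines.mpr ⟨Finset.image_subset_image hsub, ?_, ?_⟩
  · rw [Finset.card_image_of_injective _ hinj, h3]
  · rw [Finset.sum_image (fun a _ b _ h => hinj h)]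
    simp only [id] at hsum ⊢
    rw [Finset.sum_add_distrib, hsum, Finset.sum_const, h3, zero_add, smul_three]

lemma comp_translate (c : Pt) : ((fun x : Pt => x + (-c)) ∘ (fun x : Pt => x + c)) = id := by
  funext x; simp

lemma comp_translate' (c : Pt) : ((fun x : Pt => x + c) ∘ (fun x : Pt => x + (-c))) = id := by
  funext x; simp

lemma lines_translate (B : Finset Pt) (c : Pt) :
    lines (B.image (· + c)) = (lines B).image (fun S => S.image (· + c)) := by
  ext T
  simp only [Finset.mem_image]
  constructor
  · intro hT
    refine ⟨T.image (· + (-c)), ?_, ?_⟩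
    · have h := image_line (-c) hT
      rwa [Finset.image_image, comp_translate c, Finset.image_id] at h
    · rw [Finset.image_image, comp_translate' c, Finset.image_id]
  · rintro ⟨S, hS, rfl⟩
    exact image_line c hS

lemma finset_image_translate_inj (c : Pt) :
    Function.Injective (fun S : Finset Pt => S.image (· + c)) := by
  intro S S' h
  have hinj : Function.Injective (fun x : Pt => x + c) := fun a b h => by simpa using h
  exact Finset.image_injective hinj h

lemma numSets_translate (B : Finset Pt) (c : Pt) : numSets (B.image (· + c)) = numSets B := by
  rw [numSets_eq, numSets_eq, lines_translate, Finset.card_image_of_injective _ (finset_image_translate_inj c)]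

lemma deg_translate (B : Finset Pt) (c p : Pt) : deg (B.image (· + c)) (p + c) = deg B p := by
  classical
  unfold deg
  rw [lines_translate, Finset.filter_image,
    Finset.card_image_of_injective _ (finset_image_translate_inj c)]
  congr 1
  apply Finset.filter_congr
  intro S hS
  simp only [Finset.mem_image]
  constructor
  · rintro ⟨x, hx, he⟩
    obtain rfl : x = p := add_right_cancel he
    exact hx
  · intro h
    exact ⟨p, h, rfl⟩

lemma even_card_of_invol {α : Type*} [DecidableEq α] :
    ∀ (n : ℕ) (F : Finset α) (f : α → α), F.card = n →
      (∀ S ∈ F, f S ∈ F ∧ f (f S) = S ∧ f S ≠ S) → Even F.card := by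
  intro n
  induction n using Nat.strong_induction_on with
  | _ n ih =>
    intro F f hcard hF
    rcases F.eq_empty_or_nonempty with rfl | ⟨S, hS⟩
    · simp
    · obtain ⟨hfS, hff, hne⟩ := hF S hS
      have hfS' : f S ∈ F.erase S := Finset.mem_erase.mpr ⟨hne, hfS⟩
      set F' := (F.erase S).erase (f S) with hF'def
      have hc' : F'.card = F.card - 2 := by
        rw [hF'def, Finset.card_erase_of_mem hfS', Finset.card_erase_of_mem hS]
        omega
      have hcard2 : 2 ≤ F.card := by
        have : 1 ≤ (F.erase S).card := Finset.card_pos.mpr ⟨f S, hfS'⟩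
        have h2 := Finset.card_erase_of_mem hS
        omega
      have hF'mem : ∀ T, T ∈ F' → T ∈ F ∧ T ≠ S ∧ T ≠ f S := by
        intro T hT
        rw [hF'def] at hT
        obtain ⟨h1, h2⟩ := Finset.mem_erase.mp hT
        obtain ⟨h3, h4⟩ := Finset.mem_erase.mp h2
        exact ⟨h4, h3, h1⟩
      have hF'' : ∀ T ∈ F', f T ∈ F' ∧ f (f T) = T ∧ f T ≠ T := by
        intro T hT
        obtain ⟨hTF, hTS, hTfS⟩ := hF'mem T hT
        obtain ⟨h1, h2, h3⟩ := hF T hTF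
        refine ⟨?_, h2, h3⟩
        rw [hF'def]
        refine Finset.mem_erase.mpr ⟨?_, Finset.mem_erase.mpr ⟨?_, h1⟩⟩
        · intro h
          exact hTS (by rw [← h2, h, hff])
        · intro h
          exact hTfS (by rw [← h2, h])
      have hlt : F.card - 2 < n := by omega
      have := ih (F.card - 2) hlt F' f (by omega) hF''
      rw [hc'] at this
      obtain ⟨k, hk⟩ := this
      exact ⟨k + 1, by omega⟩

lemma line0_mem {B : Finset Pt} {x : Pt} (h0 : (0:Pt) ∈ B) (hx : x ∈ B) (hnx : -x ∈ B)
    (hxne : x ≠ 0) : ({0, x, -x} : Finset Pt) ∈ lines B := by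
  have hxx : x ≠ -x := neg_ne hxne
  have hnx0 : -x ≠ 0 := fun h => hxne (by simpa using h)
  refine mem_lines.mpr ⟨?_, ?_, ?_⟩
  · intro y hy
    simp only [Finset.mem_insert, Finset.mem_singleton] at hy
    rcases hy with rfl | rfl | rfl <;> assumption
  · rw [Finset.card_insert_of_notMem (by simp [Ne.symm hxne, Ne.symm hnx0]),
      Finset.card_pair hxx]
  · rw [Finset.sum_insert (by simp [Ne.symm hxne, Ne.symm hnx0]),
      Finset.sum_pair hxx]
    simp

lemma key (B : Finset Pt) (hB : B.card = 10) (h0 : (0:Pt) ∈ B) (hdeg0 : deg B 0 = 4)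
    (hL : 13 ≤ (lines B).card) : False := by
  classical
  set Sym : Finset Pt := (B.erase 0).filter (fun x => -x ∈ B) with hSymDef
  have hSymMem : ∀ x : Pt, x ∈ Sym ↔ x ∈ B ∧ x ≠ 0 ∧ -x ∈ B := by
    intro x
    rw [hSymDef, Finset.mem_filter, Finset.mem_erase]
    tauto
  have hSymNeg : ∀ x ∈ Sym, -x ∈ Sym := by
    intro x hx
    obtain ⟨h1, h2, h3⟩ := (hSymMem x).mp hx
    exact (hSymMem (-x)).mpr ⟨h3, fun h => h2 (by simpa using h), by simpa using h1⟩
  have hSymsub : Sym ⊆ B := fun x hx => ((hSymMem x).mp hx).1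
  have h0nSym : (0:Pt) ∉ Sym := fun h => ((hSymMem 0).mp h).2.1 rfl
  -- the unique line through 0 and x
  have hline0x : ∀ x ∈ Sym, ∀ S ∈ lines B, 0 ∈ S → x ∈ S → S = {0, x, -x} := by
    intro x hx S hS h0S hxS
    have hxne : x ≠ 0 := ((hSymMem x).mp hx).2.1
    have := line_eq hS h0S hxS (Ne.symm hxne)
    rwa [show -(0:Pt) - x = -x by simp] at this
  have hline0x' : ∀ x ∈ Sym, ({0, x, -x} : Finset Pt) ∈ lines B := by
    intro x hx
    obtain ⟨h1, h2, h3⟩ := (hSymMem x).mp hx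
    exact line0_mem h0 h1 h3 h2
  set lines0 : Finset (Finset Pt) := (lines B).filter (fun S => (0:Pt) ∈ S) with hlines0Def
  have hlines0card : lines0.card = 4 := hdeg0
  -- Sym has 8 elements
  have hSymcard : Sym.card = 8 := by
    have hbi : Sym = lines0.biUnion (fun S => S.erase 0) := by
      ext x
      simp only [Finset.mem_biUnion]
      constructor
      · intro hx
        refine ⟨{0, x, -x}, Finset.mem_filter.mpr ⟨hline0x' x hx, by simp⟩, ?_⟩
        exact Finset.mem_erase.mpr ⟨((hSymMem x).mp hx).2.1, by simp⟩
      · rintro ⟨S, hS, hxe⟩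
        obtain ⟨hSl, h0S⟩ := Finset.mem_filter.mp hS
        have hxS := Finset.mem_of_mem_erase hxe
        have hxne := Finset.ne_of_mem_erase hxe
        have hE := line_eq hSl h0S hxS (Ne.symm hxne)
        rw [show -(0:Pt) - x = -x by simp] at hE
        have hnx : -x ∈ S := by rw [hE]; simp
        exact (hSymMem x).mpr ⟨(mem_lines.mp hSl).1 hxS, hxne, (mem_lines.mp hSl).1 hnx⟩
    have hdisj : ∀ S ∈ lines0, ∀ S' ∈ lines0, S ≠ S' → Disjoint (S.erase 0) (S'.erase 0) := by
      intro S hS S' hS' hne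
      rw [Finset.disjoint_left]
      intro x hx hx'
      obtain ⟨hSl, h0S⟩ := Finset.mem_filter.mp hS
      obtain ⟨hS'l, h0S'⟩ := Finset.mem_filter.mp hS'
      exact hne (line_unique hSl hS'l h0S (Finset.mem_of_mem_erase hx) h0S'
        (Finset.mem_of_mem_erase hx') (Ne.symm (Finset.ne_of_mem_erase hx)))
    have he : ∀ S ∈ lines0, (S.erase 0).card = 2 := by
      intro S hS
      obtain ⟨hSl, h0S⟩ := Finset.mem_filter.mp hS
      rw [Finset.card_erase_of_mem h0S, (mem_lines.mp hSl).2.1]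
    rw [hbi, Finset.card_biUnion hdisj, Finset.sum_congr rfl he, Finset.sum_const,
      hlines0card, smul_eq_mul]
  -- the exceptional point z
  have hCcard : (insert (0:Pt) Sym).card = 9 := by
    rw [Finset.card_insert_of_notMem h0nSym, hSymcard]
  have hCsub : insert (0:Pt) Sym ⊆ B := by
    intro x hx
    rcases Finset.mem_insert.mp hx with rfl | hx
    · exact h0
    · exact hSymsub hx
  obtain ⟨z, hzdef⟩ : ∃ z, B \ insert (0:Pt) Sym = {z} := by
    rw [← Finset.card_eq_one, Finset.card_sdiff_of_subset hCsub, hCcard, hB]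
  have hzB : z ∈ B := by
    have : z ∈ B \ insert (0:Pt) Sym := hzdef ▸ Finset.mem_singleton_self z
    exact (Finset.mem_sdiff.mp this).1
  have hznC : z ∉ insert (0:Pt) Sym := by
    have : z ∈ B \ insert (0:Pt) Sym := hzdef ▸ Finset.mem_singleton_self z
    exact (Finset.mem_sdiff.mp this).2
  have hzne0 : z ≠ 0 := fun h => hznC (by rw [h]; exact Finset.mem_insert_self 0 Sym)
  have hznSym : z ∉ Sym := fun h => hznC (Finset.mem_insert_of_mem h)
  have hnzB : -z ∉ B := fun h => hznSym ((hSymMem z).mpr ⟨hzB, hzne0, h⟩)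
  have hmem_cases : ∀ x ∈ B, x = z ∨ x = 0 ∨ x ∈ Sym := by
    intro x hx
    by_cases h1 : x = z
    · exact Or.inl h1
    · have : x ∈ insert (0:Pt) Sym := by
        by_contra h2
        have : x ∈ B \ insert (0:Pt) Sym := Finset.mem_sdiff.mpr ⟨hx, h2⟩
        rw [hzdef, Finset.mem_singleton] at this
        exact h1 this
      rcases Finset.mem_insert.mp this with h | h
      · exact Or.inr (Or.inl h)
      · exact Or.inr (Or.inr h)
  -- no line contains both 0 and z
  have h0z : ∀ S ∈ lines B, 0 ∈ S → z ∉ S := by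
    intro S hS h0S hzS
    apply hnzB
    have hE := line_eq hS h0S hzS (Ne.symm hzne0)
    have : -(0:Pt) - z ∈ S := by rw [hE]; simp
    rw [show -(0:Pt) - z = -z by simp] at this
    exact (mem_lines.mp hS).1 this
  set linesz : Finset (Finset Pt) := (lines B).filter (fun S => z ∈ S) with hlineszDef
  set inner : Finset (Finset Pt) := (lines B).filter (fun S => (0:Pt) ∉ S ∧ z ∉ S) with hinnerDef
  set t : ℕ := linesz.card with htDef
  set s : ℕ := inner.card with hsDef
  -- partition of lines
  have e1 : ((lines B).filter (fun S => (0:Pt) ∉ S)).filter (fun S => z ∈ S) = linesz := by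
    rw [Finset.filter_filter, hlineszDef]
    ext S
    simp only [Finset.mem_filter]
    constructor
    · tauto
    · rintro ⟨hSl, hzS⟩
      exact ⟨hSl, fun h0S => h0z S hSl h0S hzS, hzS⟩
  have e2 : ((lines B).filter (fun S => (0:Pt) ∉ S)).filter (fun S => z ∉ S) = inner := by
    rw [Finset.filter_filter, hinnerDef]
  have hsplit : (lines B).card = 4 + t + s := by
    have h1 := Finset.card_filter_add_card_filter_not
      (s := lines B) (p := fun S => (0:Pt) ∈ S)
    have h2 := Finset.card_filter_add_card_filter_not
      (s := (lines B).filter (fun S => (0:Pt) ∉ S)) (p := fun S => z ∈ S)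
    rw [e1] at h2
    have e2' : ((lines B).filter (fun S => (0:Pt) ∉ S)).filter (fun S => ¬ z ∈ S) = inner := e2
    rw [e2'] at h2
    have h4 : ((lines B).filter (fun S => (0:Pt) ∈ S)).card = 4 := hlines0card
    omega
  -- t ≤ 4
  have ht4 : 2 * t ≤ 9 := by
    have := deg_le B z
    rw [Finset.card_erase_of_mem hzB, hB] at this
    exact this
  -- each line of linesz has exactly two Sym points, inner lines are inside Sym
  have hzline2 : ∀ S ∈ linesz, Sym.filter (fun x => x ∈ S) = S.erase z := by
    intro S hS
    obtain ⟨hSl, hzS⟩ := Finset.mem_filter.mp hS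
    ext x
    simp only [Finset.mem_filter, Finset.mem_erase]
    constructor
    · rintro ⟨hxSym, hxS⟩
      exact ⟨fun h => hznSym (h ▸ hxSym), hxS⟩
    · rintro ⟨hxnz, hxS⟩
      refine ⟨?_, hxS⟩
      rcases hmem_cases x ((mem_lines.mp hSl).1 hxS) with rfl | rfl | h
      · exact absurd rfl hxnz
      · exact absurd hzS (h0z S hSl hxS)
      · exact h
  have hinnersub : ∀ S ∈ inner, S ⊆ Sym := by
    intro S hS x hx
    obtain ⟨hSl, h0S, hzS⟩ := Finset.mem_filter.mp hS
    rcases hmem_cases x ((mem_lines.mp hSl).1 hx) with rfl | rfl | h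
    · exact absurd hx hzS
    · exact absurd hx h0S
    · exact h
  have h0line2 : ∀ S ∈ lines0, Sym.filter (fun x => x ∈ S) = S.erase 0 := by
    intro S hS
    obtain ⟨hSl, h0S⟩ := Finset.mem_filter.mp hS
    ext x
    simp only [Finset.mem_filter, Finset.mem_erase]
    constructor
    · rintro ⟨hxSym, hxS⟩
      exact ⟨((hSymMem x).mp hxSym).2.1, hxS⟩
    · rintro ⟨hxne, hxS⟩
      refine ⟨?_, hxS⟩
      rcases hmem_cases x ((mem_lines.mp hSl).1 hxS) with rfl | rfl | h
      · exact absurd hxS (h0z S hSl h0S)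
      · exact absurd rfl hxne
      · exact h
  -- sum of Sym degrees
  have hsymdeg : ∑ x ∈ Sym, deg B x = 8 + 2 * t + 3 * s := by
    have hDC := doubleCount Sym (lines B)
    have hLHS : ∑ x ∈ Sym, deg B x
        = ∑ S ∈ lines B, (Sym.filter (fun x => x ∈ S)).card := hDC
    rw [hLHS]
    have h1 := Finset.sum_filter_add_sum_filter_not (lines B) (fun S => (0:Pt) ∈ S)
      (fun S => (Sym.filter (fun x => x ∈ S)).card)
    have h2 := Finset.sum_filter_add_sum_filter_not
      ((lines B).filter (fun S => (0:Pt) ∉ S)) (fun S => z ∈ S)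
      (fun S => (Sym.filter (fun x => x ∈ S)).card)
    rw [e1] at h2
    have e2' : ((lines B).filter (fun S => (0:Pt) ∉ S)).filter (fun S => ¬ z ∈ S) = inner := e2
    rw [e2'] at h2
    have hv0 : ∑ S ∈ lines0, (Sym.filter (fun x => x ∈ S)).card = 8 := by
      have : ∀ S ∈ lines0, (Sym.filter (fun x => x ∈ S)).card = 2 := by
        intro S hS
        obtain ⟨hSl, h0S⟩ := Finset.mem_filter.mp hS
        rw [h0line2 S hS, Finset.card_erase_of_mem h0S, (mem_lines.mp hSl).2.1]
      rw [Finset.sum_congr rfl this, Finset.sum_const, hlines0card, smul_eq_mul]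
    have hvz : ∑ S ∈ linesz, (Sym.filter (fun x => x ∈ S)).card = 2 * t := by
      have : ∀ S ∈ linesz, (Sym.filter (fun x => x ∈ S)).card = 2 := by
        intro S hS
        obtain ⟨hSl, hzS⟩ := Finset.mem_filter.mp hS
        rw [hzline2 S hS, Finset.card_erase_of_mem hzS, (mem_lines.mp hSl).2.1]
      rw [Finset.sum_congr rfl this, Finset.sum_const, smul_eq_mul, mul_comm]
    have hvi : ∑ S ∈ inner, (Sym.filter (fun x => x ∈ S)).card = 3 * s := by
      have : ∀ S ∈ inner, (Sym.filter (fun x => x ∈ S)).card = 3 := by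
        intro S hS
        have hfe : Sym.filter (fun x => x ∈ S) = S := by
          ext x
          simp only [Finset.mem_filter]
          exact ⟨fun h => h.2, fun h => ⟨hinnersub S hS h, h⟩⟩
        rw [hfe, (mem_lines.mp (Finset.mem_filter.mp hS).1).2.1]
      rw [Finset.sum_congr rfl this, Finset.sum_const, smul_eq_mul, mul_comm]
    have hl0 : ∑ S ∈ (lines B).filter (fun S => (0:Pt) ∈ S),
        (Sym.filter (fun x => x ∈ S)).card = 8 := hv0
    omega
  have hdegle4 : ∀ x ∈ B, deg B x ≤ 4 := by
    intro x hx
    have := deg_le B x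
    rw [Finset.card_erase_of_mem hx, hB] at this
    omega
  have hsumle : 8 + 2 * t + 3 * s ≤ 32 := by
    rw [← hsymdeg]
    calc ∑ x ∈ Sym, deg B x ≤ ∑ _x ∈ Sym, 4 :=
          Finset.sum_le_sum (fun x hx => hdegle4 x (hSymsub hx))
      _ = 32 := by rw [Finset.sum_const, hSymcard, smul_eq_mul]
  -- parity of s
  have hnegmap : ∀ S ∈ inner, S.image (fun y => -y) ∈ inner := by
    intro S hS
    obtain ⟨hSl, h0S, hzS⟩ := Finset.mem_filter.mp hS
    have hSsub := hinnersub S hS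
    refine Finset.mem_filter.mpr ⟨?_, ?_, ?_⟩
    · refine mem_lines.mpr ⟨?_, ?_, ?_⟩
      · intro y hy
        obtain ⟨x, hx, rfl⟩ := Finset.mem_image.mp hy
        exact ((hSymMem x).mp (hSsub hx)).2.2
      · rw [Finset.card_image_of_injective _ neg_injective, (mem_lines.mp hSl).2.1]
      · rw [Finset.sum_image (fun x _ y _ h => neg_injective h)]
        simp only [id]
        have := (mem_lines.mp hSl).2.2
        simp only [id] at this
        rw [Finset.sum_neg_distrib, this, neg_zero]
    · intro hmem
      obtain ⟨x, hx, hx0⟩ := Finset.mem_image.mp hmem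
      exact ((hSymMem x).mp (hSsub hx)).2.1 (by simpa using hx0)
    · intro hmem
      obtain ⟨x, hx, hxz⟩ := Finset.mem_image.mp hmem
      apply hnzB
      have : x = -z := by rw [← hxz, neg_neg]
      rw [← this]
      exact hSymsub (hSsub hx)
  have hseven : Even s := by
    apply even_card_of_invol inner.card inner (fun S => S.image (fun y => -y)) rfl
    intro S hS
    refine ⟨hnegmap S hS, ?_, ?_⟩
    · rw [Finset.image_image]
      simp
    · intro heq
      obtain ⟨hSl, h0S, hzS⟩ := Finset.mem_filter.mp hS
      obtain ⟨x, hx⟩ : ∃ x, x ∈ S := by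
        apply Finset.card_pos.mp
        rw [(mem_lines.mp hSl).2.1]
        omega
      have hxSym : x ∈ Sym := hinnersub S hS hx
      have hxne0 : x ≠ 0 := ((hSymMem x).mp hxSym).2.1
      have hnxS : -x ∈ S := by
        rw [← heq]
        exact Finset.mem_image_of_mem _ hx
      have hE := line_eq hSl hx hnxS (neg_ne hxne0)
      apply h0S
      rw [hE]
      rw [show -x - -x = (0:Pt) by abel]
      simp
  have hs6 : s = 6 ∧ t = 3 := by
    obtain ⟨k, hk⟩ := hseven
    omega
  -- all Sym degrees are 4
  have hdeg4 : ∀ x ∈ Sym, deg B x = 4 := by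
    by_contra hcon
    push_neg at hcon
    obtain ⟨x0, hx0, hx0ne⟩ := hcon
    have hlt : ∑ x ∈ Sym, deg B x < ∑ _x ∈ Sym, 4 := by
      apply Finset.sum_lt_sum (fun x hx => hdegle4 x (hSymsub hx))
      exact ⟨x0, hx0, lt_of_le_of_ne (hdegle4 x0 (hSymsub hx0)) hx0ne⟩
    rw [Finset.sum_const, hSymcard, smul_eq_mul, hsymdeg, hs6.1, hs6.2] at hlt
    omega
  -- degree decomposition
  set izdeg : Pt → ℕ := fun x => (linesz.filter (fun S => x ∈ S)).card with hizDef
  set iideg : Pt → ℕ := fun x => (inner.filter (fun S => x ∈ S)).card with hiiDef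
  have hdecomp : ∀ x ∈ Sym, deg B x = 1 + izdeg x + iideg x := by
    intro x hx
    have hxne : x ≠ 0 := ((hSymMem x).mp hx).2.1
    have h1 := Finset.card_filter_add_card_filter_not
      (s := (lines B).filter (fun S => x ∈ S)) (p := fun S => (0:Pt) ∈ S)
    have h2 := Finset.card_filter_add_card_filter_not
      (s := ((lines B).filter (fun S => x ∈ S)).filter (fun S => ¬ (0:Pt) ∈ S))
      (p := fun S => z ∈ S)
    have d1 : ((lines B).filter (fun S => x ∈ S)).filter (fun S => (0:Pt) ∈ S)
        = {({0, x, -x} : Finset Pt)} := by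
      ext S
      simp only [Finset.mem_filter, Finset.mem_singleton]
      constructor
      · rintro ⟨⟨hSl, hxS⟩, h0S⟩
        exact hline0x x hx S hSl h0S hxS
      · rintro rfl
        exact ⟨⟨hline0x' x hx, by simp⟩, by simp⟩
    have d2 : (((lines B).filter (fun S => x ∈ S)).filter (fun S => ¬ (0:Pt) ∈ S)).filter
        (fun S => z ∈ S) = linesz.filter (fun S => x ∈ S) := by
      ext S
      constructor
      · intro h
        obtain ⟨h', hzS⟩ := Finset.mem_filter.mp h
        obtain ⟨h'', h0S⟩ := Finset.mem_filter.mp h'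
        obtain ⟨hSl, hxS⟩ := Finset.mem_filter.mp h''
        exact Finset.mem_filter.mpr ⟨Finset.mem_filter.mpr ⟨hSl, hzS⟩, hxS⟩
      · intro h
        obtain ⟨h', hxS⟩ := Finset.mem_filter.mp h
        obtain ⟨hSl, hzS⟩ := Finset.mem_filter.mp h'
        exact Finset.mem_filter.mpr ⟨Finset.mem_filter.mpr
          ⟨Finset.mem_filter.mpr ⟨hSl, hxS⟩, fun h0S => h0z S hSl h0S hzS⟩, hzS⟩
    have d3 : (((lines B).filter (fun S => x ∈ S)).filter (fun S => ¬ (0:Pt) ∈ S)).filter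
        (fun S => ¬ z ∈ S) = inner.filter (fun S => x ∈ S) := by
      ext S
      constructor
      · intro h
        obtain ⟨h', hzS⟩ := Finset.mem_filter.mp h
        obtain ⟨h'', h0S⟩ := Finset.mem_filter.mp h'
        obtain ⟨hSl, hxS⟩ := Finset.mem_filter.mp h''
        exact Finset.mem_filter.mpr ⟨Finset.mem_filter.mpr ⟨hSl, h0S, hzS⟩, hxS⟩
      · intro h
        obtain ⟨h', hxS⟩ := Finset.mem_filter.mp h
        obtain ⟨hSl, h0S, hzS⟩ := Finset.mem_filter.mp h'
        exact Finset.mem_filter.mpr ⟨Finset.mem_filter.mpr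
          ⟨Finset.mem_filter.mpr ⟨hSl, hxS⟩, h0S⟩, hzS⟩
    rw [d1] at h1
    rw [d2, d3] at h2
    have hdx : deg B x = ((lines B).filter (fun S => x ∈ S)).card := rfl
    have hiz : izdeg x = (linesz.filter (fun S => x ∈ S)).card := rfl
    have hii : iideg x = (inner.filter (fun S => x ∈ S)).card := rfl
    rw [Finset.card_singleton] at h1
    omega
  have hizle1 : ∀ x ∈ Sym, izdeg x ≤ 1 := by
    intro x hx
    apply Finset.card_le_one.mpr
    intro S hS S' hS'
    obtain ⟨hSz, hxS⟩ := Finset.mem_filter.mp hS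
    obtain ⟨hS'z, hxS'⟩ := Finset.mem_filter.mp hS'
    obtain ⟨hSl, hzS⟩ := Finset.mem_filter.mp hSz
    obtain ⟨hS'l, hzS'⟩ := Finset.mem_filter.mp hS'z
    have hzx : z ≠ x := fun h => hznSym (h ▸ hx)
    exact line_unique hSl hS'l hzS hxS hzS' hxS' hzx
  have hiineg : ∀ x ∈ Sym, iideg (-x) = iideg x := by
    intro x hx
    have himg : inner.filter (fun S => -x ∈ S)
        = (inner.filter (fun S => x ∈ S)).image (fun S => S.image (fun y => -y)) := by
      ext T
      constructor
      · intro hT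
        obtain ⟨hTi, hxT⟩ := Finset.mem_filter.mp hT
        refine Finset.mem_image.mpr ⟨T.image (fun y => -y), ?_, ?_⟩
        · refine Finset.mem_filter.mpr ⟨hnegmap T hTi, ?_⟩
          simpa using Finset.mem_image_of_mem (fun y => -y) hxT
        · rw [Finset.image_image]
          simp
      · intro hT
        obtain ⟨S, hS, rfl⟩ := Finset.mem_image.mp hT
        obtain ⟨hSi, hxS⟩ := Finset.mem_filter.mp hS
        exact Finset.mem_filter.mpr ⟨hnegmap S hSi, Finset.mem_image_of_mem _ hxS⟩
    have : iideg (-x) = (inner.filter (fun S => -x ∈ S)).card := rfl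
    rw [this, himg,
      Finset.card_image_of_injective _ (Finset.image_injective neg_injective)]
  have hizneg : ∀ x ∈ Sym, izdeg (-x) = izdeg x := by
    intro x hx
    have h1 := hdecomp x hx
    have h2 := hdecomp (-x) (hSymNeg x hx)
    rw [hdeg4 x hx] at h1
    rw [hdeg4 (-x) (hSymNeg x hx), hiineg x hx] at h2
    omega
  -- sum of izdeg over Sym is 2t = 6
  have hizsum : ∑ x ∈ Sym, izdeg x = 6 := by
    have hDC := doubleCount Sym linesz
    have hLHS : ∑ x ∈ Sym, izdeg x
        = ∑ S ∈ linesz, (Sym.filter (fun x => x ∈ S)).card := hDC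
    rw [hLHS]
    have hval : ∀ S ∈ linesz, (Sym.filter (fun x => x ∈ S)).card = 2 := by
      intro S hS
      obtain ⟨hSl, hzS⟩ := Finset.mem_filter.mp hS
      rw [hzline2 S hS, Finset.card_erase_of_mem hzS, (mem_lines.mp hSl).2.1]
    rw [Finset.sum_congr rfl hval, Finset.sum_const, smul_eq_mul, ← htDef, hs6.2]
  -- the uncovered point u
  obtain ⟨u, huSym, hizu⟩ : ∃ u ∈ Sym, izdeg u = 0 := by
    by_contra hcon
    push_neg at hcon
    have : 8 ≤ ∑ x ∈ Sym, izdeg x := by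
      calc 8 = ∑ _x ∈ Sym, 1 := by rw [Finset.sum_const, hSymcard, smul_eq_mul]
        _ ≤ ∑ x ∈ Sym, izdeg x :=
            Finset.sum_le_sum (fun x hx => Nat.one_le_iff_ne_zero.mpr (hcon x hx))
    omega
  have hizun : izdeg (-u) = 0 := by rw [hizneg u huSym]; exact hizu
  have hiiu : iideg u = 3 := by
    have := hdecomp u huSym
    rw [hdeg4 u huSym, hizu] at this
    omega
  have hiiun : iideg (-u) = 3 := by rw [hiineg u huSym, hiiu]
  have hune0 : u ≠ 0 := ((hSymMem u).mp huSym).2.1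
  -- a z-line exists
  obtain ⟨S0, hS0⟩ : ∃ S0, S0 ∈ linesz := by
    apply Finset.card_pos.mp
    rw [← htDef, hs6.2]
    omega
  have hS0l : S0 ∈ lines B := (Finset.mem_filter.mp hS0).1
  have hzS0 : z ∈ S0 := (Finset.mem_filter.mp hS0).2
  have h0S0 : (0:Pt) ∉ S0 := fun h => h0z S0 hS0l h hzS0
  -- pick a ∈ S0 ∩ Sym
  obtain ⟨a, haS0e⟩ : ∃ a, a ∈ S0.erase z := by
    apply Finset.card_pos.mp
    rw [Finset.card_erase_of_mem hzS0, (mem_lines.mp hS0l).2.1]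
    omega
  have haS0 : a ∈ S0 := Finset.mem_of_mem_erase haS0e
  have hanez : a ≠ z := Finset.ne_of_mem_erase haS0e
  have haSym : a ∈ Sym := by
    rcases hmem_cases a ((mem_lines.mp hS0l).1 haS0) with rfl | rfl | h
    · exact absurd rfl hanez
    · exact absurd haS0 h0S0
    · exact h
  have hane0 : a ≠ 0 := ((hSymMem a).mp haSym).2.1
  -- the third point q0 of S0
  set q0 : Pt := -z - a with hq0Def
  have hS0eq : S0 = {z, a, q0} := line_eq hS0l hzS0 haS0 (Ne.symm hanez)
  have hq0S0 : q0 ∈ S0 := by rw [hS0eq]; simp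
  have hq0nez : q0 ≠ z := by
    intro h
    apply hanez
    have h3 : -z - a = z := h
    have h4 : a = -(z + z) := by linear_combination -h3
    rw [two_eq_neg z, neg_neg] at h4
    exact h4
  have hq0Sym : q0 ∈ Sym := by
    rcases hmem_cases q0 ((mem_lines.mp hS0l).1 hq0S0) with h | h | h
    · exact absurd h hq0nez
    · exact absurd (h ▸ hq0S0) h0S0
    · exact h
  have hzpq : z = -(a + q0) := by rw [hq0Def]; abel
  -- a is covered, hence distinct from ±u
  have hiza : 1 ≤ izdeg a :=
    Finset.card_pos.mpr ⟨S0, Finset.mem_filter.mpr ⟨hS0, haS0⟩⟩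
  have hanu : a ≠ u := fun h => by rw [h, hizu] at hiza; omega
  have hannu : a ≠ -u := fun h => by rw [h, hizun] at hiza; omega
  -- iideg a ≥ 2
  have hiia : 2 ≤ iideg a := by
    have h1 := hdecomp a haSym
    rw [hdeg4 a haSym] at h1
    have h2 := hizle1 a haSym
    omega
  -- inner = (lines through u) ∪ (lines through -u)
  have hinnercover : ∀ S ∈ inner, u ∈ S ∨ -u ∈ S := by
    have hdisjuv : Disjoint (inner.filter (fun S => u ∈ S)) (inner.filter (fun S => -u ∈ S)) := by
      rw [Finset.disjoint_left]
      intro S hS1 hS2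
      obtain ⟨hSi, hUS⟩ := Finset.mem_filter.mp hS1
      obtain ⟨-, hnUS⟩ := Finset.mem_filter.mp hS2
      obtain ⟨hSl, h0S, -⟩ := Finset.mem_filter.mp hSi
      apply h0S
      have hE := line_eq hSl hUS hnUS (neg_ne hune0)
      rw [hE, show -u - -u = (0:Pt) by abel]
      simp
    have hsubuv : inner.filter (fun S => u ∈ S) ∪ inner.filter (fun S => -u ∈ S) ⊆ inner := by
      intro S hS
      rcases Finset.mem_union.mp hS with h | h <;> exact (Finset.mem_filter.mp h).1
    have hcard : (inner.filter (fun S => u ∈ S) ∪ inner.filter (fun S => -u ∈ S)).card = 6 := by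
      rw [Finset.card_union_of_disjoint hdisjuv]
      have h1 : (inner.filter (fun S => u ∈ S)).card = 3 := hiiu
      have h2 : (inner.filter (fun S => -u ∈ S)).card = 3 := hiiun
      omega
    have hEq : inner.filter (fun S => u ∈ S) ∪ inner.filter (fun S => -u ∈ S) = inner := by
      apply Finset.eq_of_subset_of_card_le hsubuv
      rw [hcard, ← hsDef, hs6.1]
    intro S hS
    rw [← hEq] at hS
    rcases Finset.mem_union.mp hS with h | h
    · exact Or.inl (Finset.mem_filter.mp h).2
    · exact Or.inr (Finset.mem_filter.mp h).2
  -- get the two inner lines through a, one with u, one with -u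
  have hSuv : (∃ Su ∈ inner, u ∈ Su ∧ a ∈ Su) ∧ (∃ Sv ∈ inner, -u ∈ Sv ∧ a ∈ Sv) := by
    obtain ⟨S1, hS1, S2, hS2, h12⟩ := Finset.one_lt_card.mp
      (show 1 < (inner.filter (fun S => a ∈ S)).card from lt_of_lt_of_le one_lt_two hiia)
    obtain ⟨hS1i, haS1⟩ := Finset.mem_filter.mp hS1
    obtain ⟨hS2i, haS2⟩ := Finset.mem_filter.mp hS2
    have hS1l := (Finset.mem_filter.mp hS1i).1
    have hS2l := (Finset.mem_filter.mp hS2i).1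
    rcases hinnercover S1 hS1i with hu1 | hu1 <;> rcases hinnercover S2 hS2i with hu2 | hu2
    · exact absurd (line_unique hS1l hS2l hu1 haS1 hu2 haS2 hanu.symm) h12
    · exact ⟨⟨S1, hS1i, hu1, haS1⟩, ⟨S2, hS2i, hu2, haS2⟩⟩
    · exact ⟨⟨S2, hS2i, hu2, haS2⟩, ⟨S1, hS1i, hu1, haS1⟩⟩
    · exact absurd (line_unique hS1l hS2l hu1 haS1 hu2 haS2 hannu.symm) h12
  obtain ⟨Su, hSuInner, hUSu, haSu⟩ := hSuv.1
  obtain ⟨Sv, hSvInner, hUSv, haSv⟩ := hSuv.2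
  -- third points b = -u - a and c = u - a are in Sym
  have hbSym : -u - a ∈ Sym := by
    have hE := line_eq (Finset.mem_filter.mp hSuInner).1 hUSu haSu hanu.symm
    have : -u - a ∈ Su := by rw [hE]; simp
    exact hinnersub Su hSuInner this
  have hcSym : u - a ∈ Sym := by
    have hE := line_eq (Finset.mem_filter.mp hSvInner).1 hUSv haSv hannu.symm
    have : -(-u) - a ∈ Sv := by rw [hE]; simp
    rw [show -(-u) - a = u - a by abel] at this
    exact hinnersub Sv hSvInner this
  -- independence of u and a
  have hcases3 : ∀ v : ZMod 3, v = 0 ∨ v = 1 ∨ v = 2 := by decide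
  have h2s : ∀ x : Pt, (2 : ZMod 3) • x = -x := by
    intro x
    rw [show (2 : ZMod 3) = 1 + 1 from rfl, add_smul, one_smul, two_eq_neg]
  have hindep : ∀ γ δ : ZMod 3, γ • u = δ • a → γ = 0 ∧ δ = 0 := by
    intro γ δ h
    rcases hcases3 γ with rfl | rfl | rfl <;> rcases hcases3 δ with rfl | rfl | rfl
    · exact ⟨rfl, rfl⟩
    · rw [zero_smul, one_smul] at h
      exact absurd h.symm hane0
    · rw [zero_smul, h2s] at h
      exact absurd (neg_eq_zero.mp h.symm) hane0
    · rw [zero_smul, one_smul] at h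
      exact absurd h hune0
    · rw [one_smul, one_smul] at h
      exact absurd h.symm hanu
    · rw [one_smul, h2s] at h
      exact absurd (show a = -u by rw [h, neg_neg]) hannu
    · rw [zero_smul, h2s] at h
      exact absurd (neg_eq_zero.mp h) hune0
    · rw [h2s, one_smul] at h
      exact absurd h.symm hannu
    · rw [h2s, h2s] at h
      exact absurd (neg_injective h).symm hanu
  -- the span of u and a covers insert 0 Sym
  set f : ZMod 3 × ZMod 3 → Pt := fun w => w.1 • u + w.2 • a with hfDef
  have hfinj : Function.Injective f := by
    intro w w' h
    have h' : (w.1 - w'.1) • u = (w'.2 - w.2) • a := by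
      rw [hfDef] at h
      simp only at h
      rw [sub_smul, sub_smul]
      linear_combination (norm := module) h
    obtain ⟨hγ, hδ⟩ := hindep _ _ h'
    have e1 : w.1 = w'.1 := sub_eq_zero.mp hγ
    have e2 : w.2 = w'.2 := (sub_eq_zero.mp hδ).symm
    exact Prod.ext e1 e2
  have hE'card : (Finset.univ.image f).card = 9 := by
    rw [Finset.card_image_of_injective _ hfinj, Finset.card_univ]
    rfl
  have hE'sub : Finset.univ.image f ⊆ insert (0:Pt) Sym := by
    intro x hx
    obtain ⟨w, -, rfl⟩ := Finset.mem_image.mp hx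
    have hfw : f w = w.1 • u + w.2 • a := rfl
    rw [hfw]
    rcases hcases3 w.1 with h1 | h1 | h1 <;> rcases hcases3 w.2 with h2 | h2 | h2 <;>
      rw [h1, h2] <;>
      simp only [zero_smul, one_smul, h2s, add_zero, zero_add]
    · exact Finset.mem_insert_self 0 Sym
    · exact Finset.mem_insert_of_mem haSym
    · exact Finset.mem_insert_of_mem (hSymNeg a haSym)
    · exact Finset.mem_insert_of_mem huSym
    · apply Finset.mem_insert_of_mem
      rw [show u + a = -(-u - a) by abel]
      exact hSymNeg _ hbSym
    · apply Finset.mem_insert_of_mem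
      rw [show u + -a = u - a by abel]
      exact hcSym
    · exact Finset.mem_insert_of_mem (hSymNeg u huSym)
    · apply Finset.mem_insert_of_mem
      rw [show -u + a = -(u - a) by abel]
      exact hSymNeg _ hcSym
    · apply Finset.mem_insert_of_mem
      rw [show -u + -a = -u - a by abel]
      exact hbSym
  have hE'eq : Finset.univ.image f = insert (0:Pt) Sym :=
    Finset.eq_of_subset_of_card_le hE'sub (by rw [hE'card, hCcard])
  -- q0 is in the span, hence so is z: contradiction
  have hq0span : q0 ∈ Finset.univ.image f := by rw [hE'eq]; exact Finset.mem_insert_of_mem hq0Sym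
  obtain ⟨w, -, hw⟩ := Finset.mem_image.mp hq0span
  have hzspan : z ∈ Finset.univ.image f := by
    apply Finset.mem_image.mpr
    refine ⟨(-w.1, -(1 + w.2)), Finset.mem_univ _, ?_⟩
    rw [hzpq, ← hw, hfDef]
    simp only
    module
  rw [hE'eq] at hzspan
  rcases Finset.mem_insert.mp hzspan with h | h
  · exact hzne0 h
  · exact hnzB ((hSymMem z).mp h).2.2

end Cap

theorem stmt14 (B : Finset Pt) (hB : B.card = 10) : numSets B ≤ 12 := by
  by_contra hcon
  push_neg at hcon
  have hL : 13 ≤ (Cap.lines B).card := by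
    rw [← Cap.numSets_eq]
    omega
  have hsum : ∑ p ∈ B, Cap.deg B p = 3 * (Cap.lines B).card := Cap.sum_deg B
  obtain ⟨p, hp, hdp⟩ : ∃ p ∈ B, 4 ≤ Cap.deg B p := by
    by_contra h
    push_neg at h
    have : ∑ p ∈ B, Cap.deg B p ≤ ∑ _p ∈ B, 3 :=
      Finset.sum_le_sum (fun x hx => by have := h x hx; omega)
    rw [Finset.sum_const, hB, smul_eq_mul] at this
    omega
  have hdp4 : Cap.deg B p = 4 := by
    have := Cap.deg_le B p
    rw [Finset.card_erase_of_mem hp, hB] at this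
    omega
  set B' := B.image (· + (-p)) with hB'
  have hinj : Function.Injective (fun x : Pt => x + (-p)) := fun x y h => by simpa using h
  apply Cap.key B'
  · rw [hB', Finset.card_image_of_injective _ hinj, hB]
  · exact Finset.mem_image.mpr ⟨p, hp, by simp⟩
  · have := Cap.deg_translate B (-p) p
    rwa [add_neg_cancel, hdp4] at this
  · rw [← Cap.numSets_eq, Cap.numSets_translate, Cap.numSets_eq]
    exact hL
end
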